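/- Let c ∈ (0,1), ε > 0, τ ∈ [0,1], P > 0. For β > 0 let e = e(β) > 0 solve e = (1 + c/e + cβε/(1 + βεe))^{-1}, and define S(β) = P(1 - c - cβ²ε²e²/(1+βεe)²) / (1 + Pcε(1 + 2βετ²e + β²ε²τ²e²)/(1+βεe)²). Then every interior critical point of S on (0,∞) satisfies β = P(1-τ²)/(Pcετ² + 1); i.e., ∂S/∂β = 0 at β₀ = P(1-τ²)/(Pcετ²+1). -/

import Mathlib

set_option maxHeartbeats 1000000


/-- Any interior critical point of the deterministic-equivalent SINR `S(β)` in the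
`α → ∞` limit occurs at `β = P(1-τ²)/(Pcετ²+1)`. -/
theorem iaRZF_optimal_beta {c ε τ P : ℝ}
    (hc0 : 0 < c) (hc1 : c < 1) (hε : 0 < ε)
    (hτ0 : 0 ≤ τ) (hτ1 : τ ≤ 1) (hP : 0 < P)
    (e : ℝ → ℝ)
    (he : ∀ β > (0 : ℝ), 0 < e β ∧
        e β = (1 + c / e β + c * β * ε / (1 + β * ε * e β))⁻¹)
    (hdiff : ∀ β > (0 : ℝ), DifferentiableAt ℝ e β)
    (hpos : ∀ β > (0 : ℝ), 0 < e β + β * deriv e β) :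
    ∀ β > (0 : ℝ),
      deriv (fun b : ℝ =>
        (P * (1 - c - c * b ^ 2 * ε ^ 2 * (e b) ^ 2 / (1 + b * ε * e b) ^ 2)) /
          (1 + P * c * ε * (1 + 2 * b * ε * τ ^ 2 * e b + b ^ 2 * ε ^ 2 * τ ^ 2 * (e b) ^ 2) /
            (1 + b * ε * e b) ^ 2)) β = 0 →
      β = P * (1 - τ ^ 2) / (P * c * ε * τ ^ 2 + 1) := by
  intro β hβ hcrit
  obtain ⟨hE, hfe⟩ := he β hβ
  have hτ2 : τ ^ 2 ≤ 1 := by nlinarith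
  have hEne : e β ≠ 0 := ne_of_gt hE
  have hD : 0 < 1 + β * ε * e β := by positivity
  have hDne : (1 + β * ε * e β) ≠ 0 := ne_of_gt hD
  -- fixed point in polynomial form
  have hX : 0 < 1 + c / e β + c * β * ε / (1 + β * ε * e β) := by positivity
  have h1 : e β * (1 + c / e β + c * β * ε / (1 + β * ε * e β)) = 1 := by
    nth_rewrite 1 [hfe]
    exact inv_mul_cancel₀ (ne_of_gt hX)
  have hfix : e β * (1 + β * ε * e β)
      = (1 - c) * (1 + β * ε * e β) - c * β * ε * e β := by
    field_simp at h1
    linear_combination h1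
  -- the simplified rational function
  set g : ℝ → ℝ := fun x => (P * (1 - c) - P * c * (1 - x) ^ 2) /
      ((P * c * ε * τ ^ 2 + 1) + P * c * ε * (1 - τ ^ 2) * x ^ 2) with hgdef
  have hMg : ∀ x : ℝ, 0 < (P * c * ε * τ ^ 2 + 1) + P * c * ε * (1 - τ ^ 2) * x ^ 2 := by
    intro x
    have h1 : 0 ≤ P * c * ε * (1 - τ ^ 2) * x ^ 2 := by
      have : 0 ≤ 1 - τ ^ 2 := by linarith
      positivity
    have h2 : 0 ≤ P * c * ε * τ ^ 2 := by positivity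
    linarith
  -- eventual equality
  have hcont : ContinuousAt (fun b : ℝ => 1 + b * ε * e b) β := by
    exact continuousAt_const.add (((continuousAt_id.mul continuousAt_const).mul
      (hdiff β hβ).continuousAt))
  have hev : ∀ᶠ b in nhds β, 0 < 1 + b * ε * e b := hcont (Ioi_mem_nhds hD)
  have heqev : (fun b : ℝ =>
        (P * (1 - c - c * b ^ 2 * ε ^ 2 * (e b) ^ 2 / (1 + b * ε * e b) ^ 2)) /
          (1 + P * c * ε * (1 + 2 * b * ε * τ ^ 2 * e b + b ^ 2 * ε ^ 2 * τ ^ 2 * (e b) ^ 2) /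
            (1 + b * ε * e b) ^ 2))
      =ᶠ[nhds β] fun b => g ((1 + b * ε * e b)⁻¹) := by
    filter_upwards [hev] with b hb
    have hdne : (1 + b * ε * e b) ≠ 0 := ne_of_gt hb
    have hden : 0 < 1 + P * c * ε * (1 + 2 * b * ε * τ ^ 2 * e b
        + b ^ 2 * ε ^ 2 * τ ^ 2 * (e b) ^ 2) / (1 + b * ε * e b) ^ 2 := by
      have hid : 1 + 2 * b * ε * τ ^ 2 * e b + b ^ 2 * ε ^ 2 * τ ^ 2 * (e b) ^ 2
          = (1 - τ ^ 2) + τ ^ 2 * (1 + b * ε * e b) ^ 2 := by ring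
      have hnn : 0 ≤ (1 - τ ^ 2) + τ ^ 2 * (1 + b * ε * e b) ^ 2 := by
        have : 0 ≤ 1 - τ ^ 2 := by linarith
        positivity
      have : 0 ≤ P * c * ε * (1 + 2 * b * ε * τ ^ 2 * e b
          + b ^ 2 * ε ^ 2 * τ ^ 2 * (e b) ^ 2) / (1 + b * ε * e b) ^ 2 := by
        rw [hid]
        positivity
      linarith
    have hMgb := hMg ((1 + b * ε * e b)⁻¹)
    simp only [hgdef]
    rw [div_eq_div_iff (ne_of_gt hden) (ne_of_gt hMgb)]
    field_simp
    ring
  -- derivative of the inner map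
  have hinner : HasDerivAt (fun b : ℝ => 1 + b * ε * e b)
      (ε * (e β + β * deriv e β)) β := by
    have h := (((hasDerivAt_id β).mul_const ε).mul (hdiff β hβ).hasDerivAt).const_add 1
    refine h.congr_deriv ?_
    simp only [id_eq]
    ring
  have hw : HasDerivAt (fun b : ℝ => (1 + b * ε * e b)⁻¹)
      (-(ε * (e β + β * deriv e β)) / (1 + β * ε * e β) ^ 2) β := hinner.inv hDne
  -- derivative of g at w0
  set w0 : ℝ := (1 + β * ε * e β)⁻¹ with hw0def
  have hn : HasDerivAt (fun x : ℝ => P * (1 - c) - P * c * (1 - x) ^ 2)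
      (P * c * (2 * (1 - w0))) w0 := by
    have h := ((((hasDerivAt_id w0).const_sub 1).pow 2).const_mul (P * c)).const_sub
      (P * (1 - c))
    refine h.congr_deriv ?_
    simp only [id_eq]
    ring
  have hm : HasDerivAt (fun x : ℝ => (P * c * ε * τ ^ 2 + 1) + P * c * ε * (1 - τ ^ 2) * x ^ 2)
      (P * c * ε * (1 - τ ^ 2) * (2 * w0)) w0 := by
    have h := ((hasDerivAt_pow 2 w0).const_mul (P * c * ε * (1 - τ ^ 2))).const_add
      (P * c * ε * τ ^ 2 + 1)
    refine h.congr_deriv ?_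
    push_cast
    ring
  have hgd : HasDerivAt g
      ((P * c * (2 * (1 - w0)) * ((P * c * ε * τ ^ 2 + 1) + P * c * ε * (1 - τ ^ 2) * w0 ^ 2)
        - (P * (1 - c) - P * c * (1 - w0) ^ 2) * (P * c * ε * (1 - τ ^ 2) * (2 * w0)))
        / ((P * c * ε * τ ^ 2 + 1) + P * c * ε * (1 - τ ^ 2) * w0 ^ 2) ^ 2) w0 :=
    hn.div hm (ne_of_gt (hMg w0))
  have hcomp : HasDerivAt (fun b : ℝ => g ((1 + b * ε * e b)⁻¹))
      (((P * c * (2 * (1 - w0)) * ((P * c * ε * τ ^ 2 + 1) + P * c * ε * (1 - τ ^ 2) * w0 ^ 2)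
        - (P * (1 - c) - P * c * (1 - w0) ^ 2) * (P * c * ε * (1 - τ ^ 2) * (2 * w0)))
        / ((P * c * ε * τ ^ 2 + 1) + P * c * ε * (1 - τ ^ 2) * w0 ^ 2) ^ 2)
        * (-(ε * (e β + β * deriv e β)) / (1 + β * ε * e β) ^ 2)) β :=
    by have := HasDerivAt.comp β hgd hw; exact this
  have hzero :
      ((P * c * (2 * (1 - w0)) * ((P * c * ε * τ ^ 2 + 1) + P * c * ε * (1 - τ ^ 2) * w0 ^ 2)
        - (P * (1 - c) - P * c * (1 - w0) ^ 2) * (P * c * ε * (1 - τ ^ 2) * (2 * w0)))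
        / ((P * c * ε * τ ^ 2 + 1) + P * c * ε * (1 - τ ^ 2) * w0 ^ 2) ^ 2)
        * (-(ε * (e β + β * deriv e β)) / (1 + β * ε * e β) ^ 2) = 0 := by
    rw [← hcomp.deriv]
    rw [← heqev.deriv_eq]
    exact hcrit
  have hwne : (-(ε * (e β + β * deriv e β)) / (1 + β * ε * e β) ^ 2) ≠ 0 := by
    have h1 : 0 < ε * (e β + β * deriv e β) := by
      have := hpos β hβ
      positivity
    have h2 : 0 < (1 + β * ε * e β) ^ 2 := by positivity
    have : -(ε * (e β + β * deriv e β)) / (1 + β * ε * e β) ^ 2 < 0 :=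
      div_neg_of_neg_of_pos (by linarith) h2
    linarith
  have hfrac := (mul_eq_zero.mp hzero).resolve_right hwne
  have hnum : P * c * (2 * (1 - w0)) * ((P * c * ε * τ ^ 2 + 1) + P * c * ε * (1 - τ ^ 2) * w0 ^ 2)
      - (P * (1 - c) - P * c * (1 - w0) ^ 2) * (P * c * ε * (1 - τ ^ 2) * (2 * w0)) = 0 := by
    have := (div_eq_zero_iff.mp hfrac).resolve_right (pow_ne_zero 2 (ne_of_gt (hMg w0)))
    exact this
  -- clear denominators and conclude
  rw [hw0def] at hnum
  field_simp at hnum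
  have hK : (0:ℝ) < 2 * P * c * ε * (1 + β * ε * e β) ^ 3 := by positivity
  have hkey2 : 2 * P * c * ε * (1 + β * ε * e β) ^ 3 *
      (β * (P * c * ε * τ ^ 2 + 1) * (e β * (1 + β * ε * e β) ^ 2)
        - P * (1 - τ ^ 2) * (e β * (1 + β * ε * e β) ^ 2)) = 0 := by
    linear_combination (1 + β * ε * e β) ^ 3 * hnum - 2 * P ^ 2 * c * ε * (1 - τ ^ 2) * (1 + β * ε * e β) ^ 4 * hfix
  have hX0 : β * (P * c * ε * τ ^ 2 + 1) * (e β * (1 + β * ε * e β) ^ 2)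
      = P * (1 - τ ^ 2) * (e β * (1 + β * ε * e β) ^ 2) :=
    sub_eq_zero.mp ((mul_eq_zero.mp hkey2).resolve_left (ne_of_gt hK))
  have hED : (0:ℝ) < e β * (1 + β * ε * e β) ^ 2 := by positivity
  have hfin : β * (P * c * ε * τ ^ 2 + 1) = P * (1 - τ ^ 2) :=
    mul_right_cancel₀ (ne_of_gt hED) hX0
  have hden : (0:ℝ) < P * c * ε * τ ^ 2 + 1 := by positivity
  rw [eq_div_iff (ne_of_gt hden)]
  exact hfin
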